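/- arXiv:0704.1702 — 3 statements merged into one kernel-verified Lean document; each statement's English description precedes it below -/
import Mathlib

section
/- Let K be a positive rational number and let B consist of exactly three baskets (1, 2), (b₂, 3), (b₃, 4), such that P_2(K, B) = 1 and P_3(K, B) = 2. Then K = 1/12, b₃ ∈ {1, 3}, P_4(K, B) = 3 and P_5(K, B) = 4. -/
/-- A basket `(b, r)` with `0 < b < r` and `gcd(b, r) = 1`. -/
structure Basket where
  b : ℕ
  r : ℕ
  b_pos : 0 < b
  b_lt_r : b < r
  coprime : Nat.gcd b r = 1

/-- Reid's correction term `l_Q(m)` of a basket `Q` for `m ≥ 2`. -/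
def Basket.corr (Q : Basket) (m : ℕ) : ℚ :=
  ∑ j ∈ Finset.Icc 1 (m - 1),
    ((Q.b * j % Q.r : ℕ) : ℚ) * ((Q.r : ℚ) - ((Q.b * j % Q.r : ℕ) : ℚ)) / (2 * (Q.r : ℚ))

/-- The virtual `m`-th plurigenus `P_m(K, B)` for `m ≥ 2`. -/
def plurigenus (K : ℚ) (B : Multiset Basket) (m : ℕ) : ℚ :=
  (1 / 12 : ℚ) * m * (m - 1) * (2 * m - 1) * K + (B.map (fun Q => Q.corr m)).sum

/-- `b' = b` if `2b ≤ r`, and `b' = r - b` otherwise. -/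
def Basket.b' (Q : Basket) : ℕ := if 2 * Q.b ≤ Q.r then Q.b else Q.r - Q.b

/-- The basket `(1, 2)`. -/
def B12 : Basket := ⟨1, 2, by decide, by decide, by decide⟩


lemma Icc11 : Finset.Icc 1 1 = ({1} : Finset ℕ) := rfl
lemma Icc12 : Finset.Icc 1 2 = ({1,2} : Finset ℕ) := rfl
lemma Icc13 : Finset.Icc 1 3 = ({1,2,3} : Finset ℕ) := rfl
lemma Icc14 : Finset.Icc 1 4 = ({1,2,3,4} : Finset ℕ) := rfl

lemma corr12 : B12.corr 2 = 1/4 ∧ B12.corr 3 = 1/4 ∧ B12.corr 4 = 1/2 ∧ B12.corr 5 = 1/2 := by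
  norm_num [Basket.corr, B12, Icc11, Icc12, Icc13, Icc14, Finset.sum_insert, Finset.mem_insert]

lemma corr3 (Q : Basket) (hr : Q.r = 3) :
    Q.corr 2 = 1/3 ∧ Q.corr 3 = 2/3 ∧ Q.corr 4 = 2/3 ∧ Q.corr 5 = 1 := by
  obtain ⟨b, r, hpos, hlt, hcop⟩ := Q
  simp only at hr; subst hr
  interval_cases b <;>
    norm_num [Basket.corr, Icc11, Icc12, Icc13, Icc14, Finset.sum_insert, Finset.mem_insert]

lemma corr4 (Q : Basket) (hr : Q.r = 4) :
    (Q.b = 1 ∨ Q.b = 3) ∧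
    (Q.corr 2 = 3/8 ∧ Q.corr 3 = 7/8 ∧ Q.corr 4 = 5/4 ∧ Q.corr 5 = 5/4) := by
  obtain ⟨b, r, hpos, hlt, hcop⟩ := Q
  simp only at hr; subst hr
  interval_cases b <;>
    [skip; exact absurd hcop (by decide); skip] <;>
    refine ⟨by simp, ?_, ?_, ?_, ?_⟩ <;>
    norm_num [Basket.corr, Icc11, Icc12, Icc13, Icc14, Finset.sum_insert, Finset.mem_insert]

theorem stmt9 (K : ℚ) (hK : 0 < K) (Q₂ Q₃ : Basket)
    (hr₂ : Q₂.r = 3) (hr₃ : Q₃.r = 4)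
    (h2 : plurigenus K {B12, Q₂, Q₃} 2 = 1)
    (h3 : plurigenus K {B12, Q₂, Q₃} 3 = 2) :
    K = 1 / 12 ∧ (Q₃.b = 1 ∨ Q₃.b = 3) ∧
      plurigenus K {B12, Q₂, Q₃} 4 = 3 ∧
      plurigenus K {B12, Q₂, Q₃} 5 = 4 := by
  obtain ⟨c2, c3, c4, c5⟩ := corr12
  obtain ⟨d2, d3, d4, d5⟩ := corr3 Q₂ hr₂
  obtain ⟨hb3, e2, e3, e4, e5⟩ := corr4 Q₃ hr₃
  simp only [plurigenus, Multiset.insert_eq_cons, Multiset.map_cons, Multiset.map_singleton,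
    Multiset.sum_cons, Multiset.sum_singleton, c2, c3, c4, c5, d2, d3, d4, d5,
    e2, e3, e4, e5] at h2 h3 ⊢
  norm_num at h2 h3 ⊢
  refine ⟨by linarith, hb3, by linarith, by linarith⟩
end

section
/- There is no positive rational number K and pair of baskets (b₁, r₁), (b₂, r₂) with r₁ ≤ r₂, b'₁ = 2 and b'₂ = 1 such that, for B consisting of these two baskets, P_2(K, B) = 1 and P_3(K, B) = 2. -/
lemma corr_two (Q : Basket) : Q.corr 2 = ((Q.b * (Q.r - Q.b) : ℕ) : ℚ) / (2 * Q.r) := by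
  unfold Basket.corr
  norm_num
  rw [Nat.mod_eq_of_lt Q.b_lt_r, Nat.cast_sub Q.b_lt_r.le]

theorem stmt11 :
    ¬ ∃ (K : ℚ) (Q₁ Q₂ : Basket), 0 < K ∧ Q₁.r ≤ Q₂.r ∧
      Q₁.b' = 2 ∧ Q₂.b' = 1 ∧
      plurigenus K {Q₁, Q₂} 2 = 1 ∧ plurigenus K {Q₁, Q₂} 3 = 2 := by
  rintro ⟨K, Q₁, Q₂, hK, hr, hb1, hb2, hP2, -⟩
  have hlt1 := Q₁.b_lt_r
  have hlt2 := Q₂.b_lt_r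
  obtain ⟨h1, hr1⟩ : Q₁.b * (Q₁.r - Q₁.b) = 2 * (Q₁.r - 2) ∧ 5 ≤ Q₁.r := by
    have hc := Q₁.coprime
    unfold Basket.b' at hb1
    split_ifs at hb1 with h
    · rw [hb1] at hc h ⊢
      have hodd : Q₁.r % 2 = 1 := by
        rcases Nat.even_or_odd Q₁.r with he | ho
        · have h2 : (2:ℕ) ∣ Nat.gcd 2 Q₁.r := Nat.dvd_gcd dvd_rfl he.two_dvd
          rw [hc] at h2; omega
        · exact Nat.odd_iff.mp ho
      exact ⟨rfl, by omega⟩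
    · have hb : Q₁.b = Q₁.r - 2 := by omega
      have h2 : Q₁.r - (Q₁.r - 2) = 2 := by omega
      refine ⟨?_, by omega⟩
      rw [hb, h2]; ring
  have h2 : Q₂.b * (Q₂.r - Q₂.b) = Q₂.r - 1 := by
    unfold Basket.b' at hb2
    split_ifs at hb2 with h
    · rw [hb2]; omega
    · have hb : Q₂.b = Q₂.r - 1 := by omega
      have h3 : Q₂.r - (Q₂.r - 1) = 1 := by omega
      rw [hb, h3]; omega
  simp only [plurigenus, Multiset.insert_eq_cons, Multiset.map_cons, Multiset.map_singleton,
    Multiset.sum_cons, Multiset.sum_singleton] at hP2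
  rw [corr_two, corr_two, h1, h2] at hP2
  have hr1' : (5:ℚ) ≤ Q₁.r := by exact_mod_cast hr1
  have hr2' : (Q₁.r:ℚ) ≤ Q₂.r := by exact_mod_cast hr
  have hc1 : ((2 * (Q₁.r - 2) : ℕ) : ℚ) = 2 * ((Q₁.r : ℚ) - 2) := by
    push_cast [Nat.cast_sub (by omega : 2 ≤ Q₁.r)]; ring
  have hc2 : ((Q₂.r - 1 : ℕ) : ℚ) = (Q₂.r : ℚ) - 1 := by
    push_cast [Nat.cast_sub (by omega : 1 ≤ Q₂.r)]; ring
  rw [hc1, hc2] at hP2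
  have hp1 : (0:ℚ) < Q₁.r := by linarith
  have hp2 : (0:ℚ) < Q₂.r := by linarith
  field_simp at hP2
  push_cast at hP2
  nlinarith [mul_pos (mul_pos hK hp1) hp2, mul_pos hp1 hp2]
end

section
/- Let K be a positive rational number and B a finite multiset of baskets such that P_2(K, B) = 1, P_3(K, B) = 2, P_4(K, B) = 3 and P_5(K, B) = 4. Then K ≥ 1/30, and K = 1/30 if and only if the multiset of pairs (r_Q, b'_Q) for Q ∈ B equals {(2,1), (3,1), (5,1)}, where for Q = (b, r) we write r_Q = r and b'_Q = b'. -/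
def tQ (Q : Basket) (j : ℕ) : ℚ :=
  ((Q.b * j % Q.r : ℕ) : ℚ) * ((Q.r : ℚ) - ((Q.b * j % Q.r : ℕ) : ℚ)) / (2 * (Q.r : ℚ))

def wQ (Q : Basket) : ℚ := ((Q.b' * (Q.r - Q.b') : ℕ) : ℚ) / (2 * (Q.r : ℚ))

lemma Basket.r_pos (Q : Basket) : 0 < Q.r := lt_trans Q.b_pos Q.b_lt_r

lemma Basket.b'_pos (Q : Basket) : 1 ≤ Q.b' := by
  have h1 := Q.b_pos; have h2 := Q.b_lt_r
  unfold Basket.b'; split <;> omega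

lemma Basket.b'_le (Q : Basket) : 2 * Q.b' ≤ Q.r := by
  have h2 := Q.b_lt_r
  unfold Basket.b'; split <;> omega

lemma prod_inv (Q : Basket) (j : ℕ) :
    Q.b * j % Q.r * (Q.r - Q.b * j % Q.r)
      = Q.b' * j % Q.r * (Q.r - Q.b' * j % Q.r) := by
  have hr := Q.r_pos
  have hbr := Q.b_lt_r
  unfold Basket.b'
  split
  · rfl
  · set u := Q.b * j % Q.r with hu
    set v := (Q.r - Q.b) * j % Q.r with hv
    have hu' : u < Q.r := Nat.mod_lt _ hr
    have hv' : v < Q.r := Nat.mod_lt _ hr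
    have hsum : (u + v) % Q.r = 0 := by
      rw [hu, hv, ← Nat.add_mod, ← Nat.add_mul,
        Nat.add_sub_cancel' (le_of_lt hbr), Nat.mul_mod_right]
    obtain ⟨k, hk⟩ := (Nat.dvd_iff_mod_eq_zero.mpr hsum : Q.r ∣ u + v)
    have hk2 : k < 2 := by
      by_contra hcon
      push_neg at hcon
      have : Q.r * 2 ≤ Q.r * k := Nat.mul_le_mul_left _ hcon
      omega
    interval_cases k
    · have h0 : u = 0 ∧ v = 0 := by omega
      rw [h0.1, h0.2]
    · have h1 : v = Q.r - u := by omega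
      rw [h1]
      have h2 : Q.r - (Q.r - u) = u := by omega
      rw [h2, Nat.mul_comm]

lemma nat2 (p r : ℕ) (h1 : 1 ≤ p) (h2 : 2 * p ≤ r) :
    4 * (p * 1 % r * (r - p * 1 % r)) = p * 2 % r * (r - p * 2 % r) + 2 * p * r := by
  have hpr : p < r := by omega
  rw [mul_one, Nat.mod_eq_of_lt hpr]
  rcases Nat.lt_or_ge (p * 2) r with h | h
  · rw [Nat.mod_eq_of_lt h]
    zify [hpr.le, h.le]
    ring
  · have hr2 : p * 2 = r := by omega
    rw [hr2, Nat.mod_self, ← hr2]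
    have hs : p * 2 - p = p := by omega
    simp [hs]
    ring

lemma nat3 (p r : ℕ) (h1 : 1 ≤ p) (h2 : 2 * p ≤ r) :
    9 * (p * 1 % r * (r - p * 1 % r))
      = p * 3 % r * (r - p * 3 % r) + 2 * r * min (3 * p) r := by
  have hpr : p < r := by omega
  rw [mul_one, Nat.mod_eq_of_lt hpr]
  rcases Nat.lt_or_ge (p * 3) r with h | h
  · rw [Nat.mod_eq_of_lt h, min_eq_left (by omega)]
    zify [hpr.le, h.le]
    ring
  · have h3 : p * 3 - r < r := by omega
    rw [Nat.mod_eq_sub_mod h, Nat.mod_eq_of_lt h3, min_eq_right (by omega)]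
    zify [hpr.le, h, (by omega : p * 3 - r ≤ r)]
    ring

lemma nat4 (p r : ℕ) (h1 : 1 ≤ p) (h2 : 2 * p ≤ r) :
    16 * (p * 1 % r * (r - p * 1 % r))
      = p * 4 % r * (r - p * 4 % r) + 2 * r * min (6 * p) (2 * p + r) := by
  have hpr : p < r := by omega
  rw [mul_one, Nat.mod_eq_of_lt hpr]
  rcases Nat.lt_or_ge (p * 4) r with h | h
  · rw [Nat.mod_eq_of_lt h, min_eq_left (by omega)]
    zify [hpr.le, h.le]
    ring
  · rcases Nat.lt_or_ge (p * 4 - r) r with h4 | h4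
    · rw [Nat.mod_eq_sub_mod h, Nat.mod_eq_of_lt h4, min_eq_right (by omega)]
      zify [hpr.le, h, h4.le]
      ring
    · have hr2 : p * 4 = 2 * r := by omega
      have hp2 : 2 * p = r := by omega
      rw [Nat.mod_eq_sub_mod h]
      rw [(by omega : p * 4 - r = r), Nat.mod_self, min_eq_right (by omega)]
      subst hp2
      have hs : 2 * p - p = p := by omega
      simp [hs]
      ring

lemma t_eq (Q : Basket) (j : ℕ) :
    tQ Q j = ((Q.b * j % Q.r * (Q.r - Q.b * j % Q.r) : ℕ) : ℚ) / (2 * (Q.r : ℚ)) := by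
  have h : Q.b * j % Q.r ≤ Q.r := (Nat.mod_lt _ Q.r_pos).le
  unfold tQ
  rw [Nat.cast_mul, Nat.cast_sub h]

lemma i1 (Q : Basket) : tQ Q 1 = wQ Q := by
  have h1 := Q.b'_pos
  have h2 := Q.b'_le
  have hp : Q.b' < Q.r := by omega
  rw [t_eq, prod_inv Q 1, wQ, mul_one, Nat.mod_eq_of_lt hp]

lemma i2 (Q : Basket) : 4 * tQ Q 1 - tQ Q 2 = (Q.b' : ℚ) := by
  have hr : (0:ℚ) < (Q.r : ℚ) := by exact_mod_cast Q.r_pos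
  have h := nat2 Q.b' Q.r Q.b'_pos Q.b'_le
  rw [t_eq, t_eq, prod_inv Q 1, prod_inv Q 2]
  have hc : ((4 * (Q.b' * 1 % Q.r * (Q.r - Q.b' * 1 % Q.r)) : ℕ) : ℚ)
      = ((Q.b' * 2 % Q.r * (Q.r - Q.b' * 2 % Q.r) + 2 * Q.b' * Q.r : ℕ) : ℚ) := by
    exact_mod_cast congrArg (fun n : ℕ => (n : ℚ)) h
  push_cast at hc
  simp only [mul_one] at hc ⊢
  field_simp
  push_cast
  linarith

lemma i3 (Q : Basket) : 9 * tQ Q 1 - tQ Q 3 = ((min (3 * Q.b') Q.r : ℕ) : ℚ) := by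
  have hr : (0:ℚ) < (Q.r : ℚ) := by exact_mod_cast Q.r_pos
  have h := nat3 Q.b' Q.r Q.b'_pos Q.b'_le
  rw [t_eq, t_eq, prod_inv Q 1, prod_inv Q 3]
  have hc : ((9 * (Q.b' * 1 % Q.r * (Q.r - Q.b' * 1 % Q.r)) : ℕ) : ℚ)
      = ((Q.b' * 3 % Q.r * (Q.r - Q.b' * 3 % Q.r) + 2 * Q.r * min (3 * Q.b') Q.r : ℕ) : ℚ) := by
    exact_mod_cast congrArg (fun n : ℕ => (n : ℚ)) h
  push_cast at hc
  simp only [mul_one] at hc ⊢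
  field_simp
  push_cast
  linarith

lemma i4 (Q : Basket) :
    16 * tQ Q 1 - tQ Q 4 = ((min (6 * Q.b') (2 * Q.b' + Q.r) : ℕ) : ℚ) := by
  have hr : (0:ℚ) < (Q.r : ℚ) := by exact_mod_cast Q.r_pos
  have h := nat4 Q.b' Q.r Q.b'_pos Q.b'_le
  rw [t_eq, t_eq, prod_inv Q 1, prod_inv Q 4]
  have hc : ((16 * (Q.b' * 1 % Q.r * (Q.r - Q.b' * 1 % Q.r)) : ℕ) : ℚ)
      = ((Q.b' * 4 % Q.r * (Q.r - Q.b' * 4 % Q.r)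
          + 2 * Q.r * min (6 * Q.b') (2 * Q.b' + Q.r) : ℕ) : ℚ) := by
    exact_mod_cast congrArg (fun n : ℕ => (n : ℚ)) h
  push_cast at hc
  simp only [mul_one] at hc ⊢
  field_simp
  push_cast
  linarith

lemma corr2 (Q : Basket) : Q.corr 2 = tQ Q 1 := by
  have h : Finset.Icc 1 (2 - 1) = ({1} : Finset ℕ) := by decide
  unfold Basket.corr
  rw [h, Finset.sum_singleton]
  rfl

lemma corr3_s19 (Q : Basket) : Q.corr 3 = tQ Q 1 + tQ Q 2 := by
  have h : Finset.Icc 1 (3 - 1) = ({1, 2} : Finset ℕ) := by decide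
  unfold Basket.corr
  rw [h, Finset.sum_insert (by decide), Finset.sum_singleton]
  rfl

lemma corr4_s19 (Q : Basket) : Q.corr 4 = tQ Q 1 + tQ Q 2 + tQ Q 3 := by
  have h : Finset.Icc 1 (4 - 1) = ({1, 2, 3} : Finset ℕ) := by decide
  unfold Basket.corr
  rw [h, Finset.sum_insert (by decide), Finset.sum_insert (by decide),
    Finset.sum_singleton, ← add_assoc]
  rfl

lemma corr5 (Q : Basket) : Q.corr 5 = tQ Q 1 + tQ Q 2 + tQ Q 3 + tQ Q 4 := by
  have h : Finset.Icc 1 (5 - 1) = ({1, 2, 3, 4} : Finset ℕ) := by decide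
  unfold Basket.corr
  rw [h, Finset.sum_insert (by decide), Finset.sum_insert (by decide),
    Finset.sum_insert (by decide), Finset.sum_singleton, ← add_assoc, ← add_assoc]
  rfl

lemma msum_add (s : Multiset Basket) (f g : Basket → ℚ) :
    (s.map fun Q => f Q + g Q).sum = (s.map f).sum + (s.map g).sum := by
  induction s using Multiset.induction_on with
  | empty => simp
  | cons a t ih => simp [ih]; ring

lemma msum_sub (s : Multiset Basket) (f g : Basket → ℚ) :
    (s.map fun Q => f Q - g Q).sum = (s.map f).sum - (s.map g).sum := by
  induction s using Multiset.induction_on with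
  | empty => simp
  | cons a t ih => simp [ih]; ring

lemma msum_mul (s : Multiset Basket) (c : ℚ) (f : Basket → ℚ) :
    (s.map fun Q => c * f Q).sum = c * (s.map f).sum := by
  induction s using Multiset.induction_on with
  | empty => simp
  | cons a t ih => simp [ih]; ring

lemma msum_cast (s : Multiset Basket) (f : Basket → ℕ) :
    (((s.map f).sum : ℕ) : ℚ) = (s.map fun Q => ((f Q : ℕ) : ℚ)).sum := by
  induction s using Multiset.induction_on with
  | empty => simp
  | cons a t ih => simp [ih]

lemma leaf3 (K : ℚ) (hK : 0 < K) (Qa Qb Qc : Basket)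
    (ha : Qa.b' = 1) (hra : Qa.r = 2)
    (hb : Qb.b' = 1) (hrb : Qb.r = 3)
    (hc : Qc.b' = 1) (hrc : 4 ≤ Qc.r)
    (eK : K = 2 - 2 * (wQ Qa + wQ Qb + wQ Qc)) :
    1 / 30 ≤ K ∧ (K = 1 / 30 ↔
      ({(Qa.r, Qa.b'), (Qb.r, Qb.b'), (Qc.r, Qc.b')} : Multiset (ℕ × ℕ))
        = {(2, 1), (3, 1), (5, 1)}) := by
  have hwa : wQ Qa = 1 / 4 := by rw [wQ, ha, hra]; norm_num
  have hwb : wQ Qb = 1 / 3 := by rw [wQ, hb, hrb]; norm_num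
  have hr0 : (0 : ℚ) < (Qc.r : ℚ) := by
    have : (0 : ℕ) < Qc.r := by omega
    exact_mod_cast this
  have hwc : wQ Qc = ((Qc.r : ℚ) - 1) / (2 * Qc.r) := by
    rw [wQ, hc, one_mul, Nat.cast_sub (by omega), Nat.cast_one]
  have hKr : K = (6 - (Qc.r : ℚ)) / (6 * Qc.r) := by
    rw [eK, hwa, hwb, hwc]
    field_simp
    ring
  have h6 : (Qc.r : ℚ) < 6 := by
    by_contra hcon
    push_neg at hcon
    have hnum : (6 : ℚ) - Qc.r ≤ 0 := by linarith
    have : K ≤ 0 := by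
      rw [hKr]
      exact div_nonpos_of_nonpos_of_nonneg hnum (by positivity)
    linarith
  have h6' : Qc.r < 6 := by exact_mod_cast h6
  rcases (by omega : Qc.r = 4 ∨ Qc.r = 5) with h | h
  · rw [h] at hKr
    norm_num at hKr
    constructor
    · rw [hKr]; norm_num
    · constructor
      · intro hk
        rw [hKr] at hk
        norm_num at hk
      · intro hm
        rw [ha, hra, hb, hrb, hc, h] at hm
        exact absurd hm (by decide)
  · rw [h] at hKr
    norm_num at hKr
    refine ⟨le_of_eq hKr.symm, ?_, fun _ => hKr⟩
    intro _
    rw [ha, hra, hb, hrb, hc, h]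

lemma leaf2a (K : ℚ) (hK : 0 < K) (Qa Qb : Basket)
    (ha : Qa.b' = 1) (hra : Qa.r = 2)
    (hb : Qb.b' = 2) (hrb : Qb.r = 7)
    (eK : K = 2 - 2 * (wQ Qa + wQ Qb)) :
    1 / 30 ≤ K ∧ (K = 1 / 30 ↔
      ({(Qa.r, Qa.b'), (Qb.r, Qb.b')} : Multiset (ℕ × ℕ)) = {(2, 1), (3, 1), (5, 1)}) := by
  have hwa : wQ Qa = 1 / 4 := by rw [wQ, ha, hra]; norm_num
  have hwb : wQ Qb = 5 / 7 := by rw [wQ, hb, hrb]; norm_num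
  have hKr : K = 1 / 14 := by rw [eK, hwa, hwb]; norm_num
  constructor
  · rw [hKr]; norm_num
  · constructor
    · intro hk; rw [hKr] at hk; norm_num at hk
    · intro hm
      rw [ha, hra, hb, hrb] at hm
      exact absurd hm (by decide)

lemma leaf2b (K : ℚ) (hK : 0 < K) (Qa Qb : Basket)
    (ha : Qa.b' = 1) (hra : 4 ≤ Qa.r)
    (hb : Qb.b' = 2) (hrb : Qb.r = 5)
    (eK : K = 2 - 2 * (wQ Qa + wQ Qb)) :
    1 / 30 ≤ K ∧ (K = 1 / 30 ↔
      ({(Qa.r, Qa.b'), (Qb.r, Qb.b')} : Multiset (ℕ × ℕ)) = {(2, 1), (3, 1), (5, 1)}) := by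
  have hwb : wQ Qb = 3 / 5 := by rw [wQ, hb, hrb]; norm_num
  have hr0 : (0 : ℚ) < (Qa.r : ℚ) := by
    have : (0 : ℕ) < Qa.r := by omega
    exact_mod_cast this
  have hwa : wQ Qa = ((Qa.r : ℚ) - 1) / (2 * Qa.r) := by
    rw [wQ, ha, one_mul, Nat.cast_sub (by omega), Nat.cast_one]
  have hKr : K = (5 - (Qa.r : ℚ)) / (5 * Qa.r) := by
    rw [eK, hwa, hwb]
    field_simp
    ring
  have h5 : (Qa.r : ℚ) < 5 := by
    by_contra hcon
    push_neg at hcon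
    have hnum : (5 : ℚ) - Qa.r ≤ 0 := by linarith
    have : K ≤ 0 := by
      rw [hKr]
      exact div_nonpos_of_nonpos_of_nonneg hnum (by positivity)
    linarith
  have h5' : Qa.r < 5 := by exact_mod_cast h5
  have h4 : Qa.r = 4 := by omega
  rw [h4] at hKr
  norm_num at hKr
  constructor
  · rw [hKr]; norm_num
  · constructor
    · intro hk; rw [hKr] at hk; norm_num at hk
    · intro hm
      rw [ha, h4, hb, hrb] at hm
      exact absurd hm (by decide)

section msperm
variable {α : Type*} (a b c : α)

lemma ms_swap2 : (a ::ₘ {b} : Multiset α) = b ::ₘ {a} := Multiset.cons_swap a b 0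

lemma ms_swap12 : (a ::ₘ b ::ₘ {c} : Multiset α) = b ::ₘ a ::ₘ {c} := Multiset.cons_swap a b _

lemma ms_swap23 : (a ::ₘ b ::ₘ {c} : Multiset α) = a ::ₘ c ::ₘ {b} := by
  show a ::ₘ b ::ₘ c ::ₘ 0 = a ::ₘ c ::ₘ b ::ₘ 0
  rw [Multiset.cons_swap b c]

lemma ms_swap13 : (a ::ₘ b ::ₘ {c} : Multiset α) = c ::ₘ b ::ₘ {a} := by
  show a ::ₘ b ::ₘ c ::ₘ 0 = c ::ₘ b ::ₘ a ::ₘ 0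
  rw [Multiset.cons_swap a b, Multiset.cons_swap a c, Multiset.cons_swap b c]

lemma ms_rot : (a ::ₘ b ::ₘ {c} : Multiset α) = b ::ₘ c ::ₘ {a} := by
  show a ::ₘ b ::ₘ c ::ₘ 0 = b ::ₘ c ::ₘ a ::ₘ 0
  rw [Multiset.cons_swap a b, Multiset.cons_swap a c]

lemma ms_rot2 : (a ::ₘ b ::ₘ {c} : Multiset α) = c ::ₘ a ::ₘ {b} := by
  show a ::ₘ b ::ₘ c ::ₘ 0 = c ::ₘ a ::ₘ b ::ₘ 0
  rw [Multiset.cons_swap b c, Multiset.cons_swap a c]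

end msperm

set_option maxHeartbeats 1600000 in
lemma core (K : ℚ) (hK : 0 < K) (B : Multiset Basket)
    (e1 : (B.map (fun Q => Q.b')).sum = 3)
    (e3 : (B.map (fun Q => min (3 * Q.b') Q.r)).sum = 8)
    (e4 : (B.map (fun Q => min (6 * Q.b') (2 * Q.b' + Q.r))).sum = 15)
    (eK : K = 2 - 2 * (B.map wQ).sum) :
    1 / 30 ≤ K ∧ (K = 1 / 30 ↔
      B.map (fun Q => (Q.r, Q.b')) = ({(2, 1), (3, 1), (5, 1)} : Multiset (ℕ × ℕ))) := by
  have hcard : Multiset.card B ≤ 3 := by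
    have key : ∀ s : Multiset Basket, Multiset.card s ≤ (s.map (fun Q => Q.b')).sum := by
      intro s
      induction s using Multiset.induction_on with
      | empty => simp
      | cons a t ih =>
        have := a.b'_pos
        simp only [Multiset.map_cons, Multiset.sum_cons, Multiset.card_cons]
        omega
    have := key B
    omega
  obtain hc | hc | hc | hc : Multiset.card B = 0 ∨ Multiset.card B = 1 ∨
      Multiset.card B = 2 ∨ Multiset.card B = 3 := by omega
  · rw [Multiset.card_eq_zero] at hc
    subst hc
    simp at e1
  · rw [Multiset.card_eq_one] at hc
    obtain ⟨Q, rfl⟩ := hc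
    simp only [Multiset.map_singleton, Multiset.sum_singleton] at e1 e3 e4
    have := Q.b'_le
    rw [e1] at e3 e4 this
    omega
  · rw [Multiset.card_eq_two] at hc
    obtain ⟨Q1, Q2, rfl⟩ := hc
    simp only [Multiset.insert_eq_cons, Multiset.map_cons, Multiset.sum_cons,
      Multiset.map_singleton, Multiset.sum_singleton] at e1 e3 e4 eK ⊢
    have hp1 := Q1.b'_pos; have hp2 := Q2.b'_pos
    have hl1 := Q1.b'_le; have hl2 := Q2.b'_le
    rcases (by omega : (Q1.b' = 1 ∧ Q2.b' = 2) ∨ (Q1.b' = 2 ∧ Q2.b' = 1)) with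
      ⟨ha, hb⟩ | ⟨ha, hb⟩
    · rw [ha, hb] at e3 e4
      rcases (by omega : (Q1.r = 2 ∧ Q2.r = 7) ∨ (4 ≤ Q1.r ∧ Q2.r = 5)) with
        ⟨h1, h2⟩ | ⟨h1, h2⟩
      · exact leaf2a K hK Q1 Q2 ha h1 hb h2 eK
      · exact leaf2b K hK Q1 Q2 ha h1 hb h2 eK
    · rw [ha, hb] at e3 e4
      rw [ms_swap2]
      rcases (by omega : (Q2.r = 2 ∧ Q1.r = 7) ∨ (4 ≤ Q2.r ∧ Q1.r = 5)) with
        ⟨h1, h2⟩ | ⟨h1, h2⟩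
      · exact leaf2a K hK Q2 Q1 hb h1 ha h2 (by rw [eK]; ring)
      · exact leaf2b K hK Q2 Q1 hb h1 ha h2 (by rw [eK]; ring)
  · rw [Multiset.card_eq_three] at hc
    obtain ⟨Q1, Q2, Q3, rfl⟩ := hc
    simp only [Multiset.insert_eq_cons, Multiset.map_cons, Multiset.sum_cons,
      Multiset.map_singleton, Multiset.sum_singleton] at e1 e3 e4 eK ⊢
    have hp1 := Q1.b'_pos; have hp2 := Q2.b'_pos; have hp3 := Q3.b'_pos
    have hl1 := Q1.b'_le; have hl2 := Q2.b'_le; have hl3 := Q3.b'_le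
    have hb1 : Q1.b' = 1 := by omega
    have hb2 : Q2.b' = 1 := by omega
    have hb3 : Q3.b' = 1 := by omega
    rw [hb1, hb2, hb3] at e3 e4
    rcases (by omega :
        (Q1.r = 2 ∧ Q2.r = 3 ∧ 4 ≤ Q3.r) ∨ (Q1.r = 2 ∧ Q3.r = 3 ∧ 4 ≤ Q2.r) ∨
        (Q2.r = 2 ∧ Q1.r = 3 ∧ 4 ≤ Q3.r) ∨ (Q2.r = 2 ∧ Q3.r = 3 ∧ 4 ≤ Q1.r) ∨
        (Q3.r = 2 ∧ Q1.r = 3 ∧ 4 ≤ Q2.r) ∨ (Q3.r = 2 ∧ Q2.r = 3 ∧ 4 ≤ Q1.r)) with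
      ⟨u, v, w⟩ | ⟨u, v, w⟩ | ⟨u, v, w⟩ | ⟨u, v, w⟩ | ⟨u, v, w⟩ | ⟨u, v, w⟩
    · exact leaf3 K hK Q1 Q2 Q3 hb1 u hb2 v hb3 w (by rw [eK]; ring)
    · rw [ms_swap23]
      exact leaf3 K hK Q1 Q3 Q2 hb1 u hb3 v hb2 w (by rw [eK]; ring)
    · rw [ms_swap12]
      exact leaf3 K hK Q2 Q1 Q3 hb2 u hb1 v hb3 w (by rw [eK]; ring)
    · rw [ms_rot]
      exact leaf3 K hK Q2 Q3 Q1 hb2 u hb3 v hb1 w (by rw [eK]; ring)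
    · rw [ms_rot2]
      exact leaf3 K hK Q3 Q1 Q2 hb3 u hb1 v hb2 w (by rw [eK]; ring)
    · rw [ms_swap13]
      exact leaf3 K hK Q3 Q2 Q1 hb3 u hb2 v hb1 w (by rw [eK]; ring)

theorem stmt19 (K : ℚ) (hK : 0 < K) (B : Multiset Basket)
    (h2 : plurigenus K B 2 = 1) (h3 : plurigenus K B 3 = 2)
    (h4 : plurigenus K B 4 = 3) (h5 : plurigenus K B 5 = 4) :
    1 / 30 ≤ K ∧
    (K = 1 / 30 ↔
      B.map (fun Q => (Q.r, Q.b')) = ({(2, 1), (3, 1), (5, 1)} : Multiset (ℕ × ℕ))) := by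
  have hA : (1 / 2 : ℚ) * K + (B.map (fun Q => tQ Q 1)).sum = 1 := by
    have h := h2
    unfold plurigenus at h
    rw [show (fun Q : Basket => Q.corr 2) = (fun Q => tQ Q 1) from funext corr2] at h
    push_cast at h
    ring_nf at h ⊢
    linarith
  have hB : (5 / 2 : ℚ) * K + ((B.map (fun Q => tQ Q 1)).sum
      + (B.map (fun Q => tQ Q 2)).sum) = 2 := by
    have h := h3
    unfold plurigenus at h
    rw [show (fun Q : Basket => Q.corr 3) = (fun Q => tQ Q 1 + tQ Q 2) from funext corr3_s19,
      msum_add] at h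
    push_cast at h
    ring_nf at h ⊢
    linarith
  have hC : (7 : ℚ) * K + ((B.map (fun Q => tQ Q 1)).sum
      + (B.map (fun Q => tQ Q 2)).sum + (B.map (fun Q => tQ Q 3)).sum) = 3 := by
    have h := h4
    unfold plurigenus at h
    rw [show (fun Q : Basket => Q.corr 4) = (fun Q => tQ Q 1 + tQ Q 2 + tQ Q 3) from
      funext corr4_s19, show (fun Q : Basket => tQ Q 1 + tQ Q 2 + tQ Q 3)
        = (fun Q => (tQ Q 1 + tQ Q 2) + tQ Q 3) from rfl, msum_add, msum_add] at h
    push_cast at h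
    ring_nf at h ⊢
    linarith
  have hD : (15 : ℚ) * K + ((B.map (fun Q => tQ Q 1)).sum + (B.map (fun Q => tQ Q 2)).sum
      + (B.map (fun Q => tQ Q 3)).sum + (B.map (fun Q => tQ Q 4)).sum) = 4 := by
    have h := h5
    unfold plurigenus at h
    rw [show (fun Q : Basket => Q.corr 5)
        = (fun Q => (tQ Q 1 + tQ Q 2 + tQ Q 3) + tQ Q 4) from funext corr5,
      msum_add, show (fun Q : Basket => tQ Q 1 + tQ Q 2 + tQ Q 3)
        = (fun Q => (tQ Q 1 + tQ Q 2) + tQ Q 3) from rfl, msum_add, msum_add] at h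
    push_cast at h
    ring_nf at h ⊢
    linarith
  set U1 := (B.map (fun Q => tQ Q 1)).sum with hU1
  set U2 := (B.map (fun Q => tQ Q 2)).sum with hU2
  set U3 := (B.map (fun Q => tQ Q 3)).sum with hU3
  set U4 := (B.map (fun Q => tQ Q 4)).sum with hU4
  have e1 : (B.map (fun Q => Q.b')).sum = 3 := by
    have hq : (B.map (fun Q => ((Q.b' : ℕ) : ℚ))).sum = 3 := by
      rw [show (fun Q : Basket => ((Q.b' : ℕ) : ℚ))
          = (fun Q => 4 * tQ Q 1 - tQ Q 2) from funext (fun Q => (i2 Q).symm),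
        msum_sub, msum_mul]
      linarith
    have := (msum_cast B (fun Q => Q.b')).trans hq
    exact_mod_cast this
  have e3 : (B.map (fun Q => min (3 * Q.b') Q.r)).sum = 8 := by
    have hq : (B.map (fun Q => ((min (3 * Q.b') Q.r : ℕ) : ℚ))).sum = 8 := by
      rw [show (fun Q : Basket => ((min (3 * Q.b') Q.r : ℕ) : ℚ))
          = (fun Q => 9 * tQ Q 1 - tQ Q 3) from funext (fun Q => (i3 Q).symm),
        msum_sub, msum_mul]
      linarith
    have := (msum_cast B (fun Q => min (3 * Q.b') Q.r)).trans hq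
    exact_mod_cast this
  have e4 : (B.map (fun Q => min (6 * Q.b') (2 * Q.b' + Q.r))).sum = 15 := by
    have hq : (B.map (fun Q => ((min (6 * Q.b') (2 * Q.b' + Q.r) : ℕ) : ℚ))).sum = 15 := by
      rw [show (fun Q : Basket => ((min (6 * Q.b') (2 * Q.b' + Q.r) : ℕ) : ℚ))
          = (fun Q => 16 * tQ Q 1 - tQ Q 4) from funext (fun Q => (i4 Q).symm),
        msum_sub, msum_mul]
      linarith
    have := (msum_cast B (fun Q => min (6 * Q.b') (2 * Q.b' + Q.r))).trans hq
    exact_mod_cast this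
  have eK : K = 2 - 2 * (B.map wQ).sum := by
    rw [show wQ = (fun Q => tQ Q 1) from funext (fun Q => (i1 Q).symm), ← hU1]
    linarith
  exact core K hK B e1 e3 e4 eK
end
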